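/- arXiv:2106.02152 — 2 statements merged into one kernel-verified Lean document; each statement's English description precedes it below -/
import Mathlib

section
/- Let h, f > 0 be real numbers with h > f. The function g(z) = (2h|z|² + f z + f z̄)/(1 − |z|²), defined for complex z with |z| ≠ 1, attains its minimum over the open unit disk at z⁺ = (−h + √(h² − f²))/f, with minimum value −h + √(h² − f²); moreover |z⁺| < 1. -/
set_option maxHeartbeats 800000


/-- for reals `0 < f < h`, the function
`g(z) = (2h|z|² + f z + f z̄)/(1 − |z|²)` attains its minimum on the open
unit disk at `z⁺ = (−h + √(h² − f²))/f`, with minimum value `−h + √(h² − f²)`,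
and `|z⁺| < 1`. -/
theorem stmt3 (h f : ℝ) (hf : 0 < f) (hhf : f < h) :
    let g : ℂ → ℝ := fun z => (2 * h * ‖z‖ ^ 2 + 2 * f * z.re) / (1 - ‖z‖ ^ 2)
    let zp : ℝ := (-h + Real.sqrt (h ^ 2 - f ^ 2)) / f
    |zp| < 1 ∧ g (zp : ℂ) = -h + Real.sqrt (h ^ 2 - f ^ 2) ∧
      ∀ z : ℂ, ‖z‖ < 1 → g (zp : ℂ) ≤ g z := by
  intro g zp
  set s := Real.sqrt (h ^ 2 - f ^ 2) with hs
  have hh : 0 < h := hf.trans hhf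
  have hs2 : s ^ 2 = h ^ 2 - f ^ 2 := Real.sq_sqrt (by nlinarith)
  have hs0 : 0 ≤ s := Real.sqrt_nonneg _
  have hsh : s < h := by nlinarith
  have hzp : zp = (-h + s) / f := rfl
  clear_value s zp
  have hzpneg : zp < 0 := by
    rw [hzp]; apply div_neg_of_neg_of_pos (by linarith) hf
  have hzpgt : -1 < zp := by
    rw [hzp, lt_div_iff₀ hf]
    nlinarith [hs2, hs0, mul_pos hf (sub_pos.mpr hhf)]
  have habs : |zp| < 1 := abs_lt.mpr ⟨hzpgt, by linarith⟩
  have hquad : f * zp ^ 2 + 2 * h * zp + f = 0 := by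
    rw [hzp]; field_simp; nlinarith
  have hnormzp : ‖(zp : ℂ)‖ = |zp| := Complex.norm_real zp
  have hre : (zp : ℂ).re = zp := rfl
  have hzp2lt : zp ^ 2 < 1 := by nlinarith [abs_nonneg zp, sq_abs zp]
  have hval : g (zp : ℂ) = -h + s := by
    show (2 * h * ‖(zp : ℂ)‖ ^ 2 + 2 * f * (zp : ℂ).re) / (1 - ‖(zp : ℂ)‖ ^ 2) = -h + s
    rw [hnormzp, hre, sq_abs]
    rw [div_eq_iff (by nlinarith : 1 - zp ^ 2 ≠ 0)]
    have hfzp : f * zp = -h + s := by rw [hzp]; field_simp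
    nlinarith [hquad]
  refine ⟨habs, hval, ?_⟩
  intro z hz
  rw [hval]
  have hd : 0 < 1 - ‖z‖ ^ 2 := by nlinarith [norm_nonneg z]
  rw [le_div_iff₀ hd]
  have hrele : z.re ^ 2 ≤ ‖z‖ ^ 2 := by
    have := Complex.sq_norm_sub_sq_im z
    nlinarith [sq_nonneg z.im, Complex.sq_norm z, norm_nonneg z]
  have hfzp : f * zp = -h + s := by rw [hzp]; field_simp
  have e1 : (h + s) * zp = -f := by
    rw [hzp]; field_simp; nlinarith [hs2]
  have e2 : (h + s) * zp ^ 2 = h - s := by linear_combination zp * e1 - hfzp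
  nlinarith [mul_nonneg (by linarith : (0:ℝ) ≤ h + s) (sq_nonneg (z.re - zp)),
    mul_nonneg (by linarith : (0:ℝ) ≤ h + s) (by linarith : (0:ℝ) ≤ ‖z‖ ^ 2 - z.re ^ 2), e1, e2]
end

section
/- Let h and k be bounded operators on a Hilbert space H with conjugation C, with k C-symmetric (kᵀ = k), and suppose k satisfies the Riccati equation h∘k + k∘hᵀ + f + k∘f̄∘k = 0 for a bounded C-symmetric operator f. Then (h + k∘f̄)∘(I − k∘k̄) = (I − k∘k̄)∘(h + f∘k̄), where hᵀ = C h* C, k̄ = C k C, f̄ = C f C. -/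
open ContinuousLinearMap

/-- if `k` is C-symmetric and solves the operator Riccati
equation `h∘k + k∘hᵀ + f + k∘f̄∘k = 0` with `f` C-symmetric, `h` self-adjoint
and real (`h̄ = hᵀ`), then `(h + k∘f̄)∘(I − k∘k̄) = (I − k∘k̄)∘(h + f∘k̄)`. -/
theorem stmt13
    {H : Type*} [NormedAddCommGroup H] [InnerProductSpace ℂ H] [CompleteSpace H]
    (C : H → H)
    (hC_add : ∀ x y, C (x + y) = C x + C y)
    (hC_smul : ∀ (a : ℂ) (x : H), C (a • x) = (starRingEnd ℂ a) • C x)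
    (hC_inv : Function.Involutive C)
    (hC_inner : ∀ x y : H, (inner ℂ (C x) (C y) : ℂ) = inner ℂ y x)
    (h₀ k f hT kbar fbar hbar : H →L[ℂ] H)
    -- definitions of conjugates/transposes via C
    (hhT : ∀ x, hT x = C (ContinuousLinearMap.adjoint h₀ (C x)))
    (hkbar : ∀ x, kbar x = C (k (C x)))
    (hfbar : ∀ x, fbar x = C (f (C x)))
    (hhbar : ∀ x, hbar x = C (h₀ (C x)))
    -- structural hypotheses
    (hsa : IsSelfAdjoint h₀)
    (hreal : hbar = hT)
    (hkT : ∀ x, C (ContinuousLinearMap.adjoint k (C x)) = k x)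
    (hfT : ∀ x, C (ContinuousLinearMap.adjoint f (C x)) = f x)
    -- operator Riccati equation
    (hRic : h₀ ∘L k + k ∘L hT + f + k ∘L fbar ∘L k = 0) :
    (h₀ + k ∘L fbar) ∘L (1 - k ∘L kbar) = (1 - k ∘L kbar) ∘L (h₀ + f ∘L kbar) := by
  -- C sends 0 to 0
  have hC0 : C 0 = 0 := by
    have := hC_smul 0 0
    simpa using this
  have hCC : ∀ y, C (C y) = y := hC_inv
  -- adjoint of h₀ is h₀
  have hadj : ContinuousLinearMap.adjoint h₀ = h₀ := hsa.adjoint_eq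
  -- conjugated Riccati equation
  have hRic2 : hT ∘L kbar + kbar ∘L h₀ + fbar + kbar ∘L f ∘L kbar = 0 := by
    ext x
    have h1 := congrArg C (congrFun (congrArg (fun T : H →L[ℂ] H => (T : H → H)) hRic) (C x))
    simp only [ContinuousLinearMap.add_apply, ContinuousLinearMap.comp_apply,
      ContinuousLinearMap.zero_apply] at h1
    rw [hC_add, hC_add, hC_add, hC0] at h1
    have t1 : C (h₀ (k (C x))) = hT (kbar x) := by
      rw [← hreal, hhbar, hkbar, hCC]
    have t2 : C (k (hT (C x))) = kbar (h₀ x) := by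
      rw [hkbar]
      congr 1
      rw [hhT, hadj, hCC]
    have t4 : C (k (fbar (k (C x)))) = kbar (f (kbar x)) := by
      simp only [hkbar, hfbar, hCC]
    rw [t1, t2, t4, ← hfbar] at h1
    simpa using h1
  have hRic' : h₀ * k + k * hT + f + k * fbar * k = 0 := hRic
  have hRic2' : hT * kbar + kbar * h₀ + fbar + kbar * f * kbar = 0 := hRic2
  have key : (h₀ + k * fbar) * (1 - k * kbar) - (1 - k * kbar) * (h₀ + f * kbar)
      = -((h₀ * k + k * hT + f + k * fbar * k) * kbar)
        + k * (hT * kbar + kbar * h₀ + fbar + kbar * f * kbar) := by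
    noncomm_ring
  rw [hRic', hRic2'] at key
  simp only [zero_mul, mul_zero, neg_zero, add_zero] at key
  exact sub_eq_zero.mp key
end
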